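/- Let D = diag(d_1, ..., d_N) be a real diagonal N×N matrix and y ∈ ℝ^N a row vector with all d_i ≠ 0. Then det(yᵀy + D) = det(D) · (1 + Σ_i y_i²/d_i). Consequently, if d_1, ..., d_{N-1} > 0, d_N < 0, and 1 + Σ_i y_i²/d_i < 0, then the symmetric matrix yᵀy + D is positive definite. -/

import Mathlib

open Finset

noncomputable def esym {n : ℕ} (k : ℕ) (lam : Fin n → ℝ) : ℝ :=
  ∑ s ∈ Finset.univ.powersetCard k, ∏ i ∈ s, lam i

noncomputable def esym1 {n : ℕ} (k : ℕ) (lam : Fin n → ℝ) (i : Fin n) : ℝ :=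
  ∑ s ∈ (Finset.univ.erase i).powersetCard k, ∏ j ∈ s, lam j

noncomputable def esym2 {n : ℕ} (k : ℕ) (lam : Fin n → ℝ) (i j : Fin n) : ℝ :=
  ∑ s ∈ ((Finset.univ.erase i).erase j).powersetCard k, ∏ l ∈ s, lam l

def GardingCone (n k : ℕ) : Set (Fin n → ℝ) :=
  {lam | ∀ j : ℕ, 1 ≤ j → j ≤ k → 0 < esym j lam}

open Matrix in
theorem stmt14 {N : ℕ} (hN : 1 ≤ N) (d : Fin N → ℝ) (y : Fin N → ℝ)
    (hd : ∀ i, d i ≠ 0) :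
    (Matrix.vecMulVec y y + Matrix.diagonal d).det =
        (∏ i, d i) * (1 + ∑ i, y i ^ 2 / d i) ∧
    ((∀ i : Fin N, (i : ℕ) < N - 1 → 0 < d i) → d ⟨N - 1, by omega⟩ < 0 →
      1 + ∑ i, y i ^ 2 / d i < 0 →
      (Matrix.vecMulVec y y + Matrix.diagonal d).PosDef) := by
  constructor
  · have hu : IsUnit (Matrix.diagonal d).det := by
      rw [Matrix.det_diagonal]
      exact isUnit_iff_ne_zero.mpr (Finset.prod_ne_zero_iff.mpr fun i _ => hd i)
    rw [Matrix.vecMulVec_eq Unit, add_comm, Matrix.det_add_replicateCol_mul_replicateRow hu, Matrix.det_diagonal]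
    congr 1
    have hinv : (Matrix.diagonal d)⁻¹ = Matrix.diagonal (fun i => (d i)⁻¹) :=
      Matrix.inv_eq_right_inv (by
        rw [Matrix.diagonal_mul_diagonal]
        convert Matrix.diagonal_one with i
        exact mul_inv_cancel₀ (hd i))
    rw [Matrix.det_unique, hinv]
    simp only [Matrix.add_apply, Matrix.one_apply_eq, Matrix.mul_apply, Matrix.mul_diagonal,
      Matrix.replicateRow_apply, Matrix.replicateCol_apply]
    congr 1
    apply Finset.sum_congr rfl
    intro i _
    rw [Finset.sum_eq_single i (by intro b _ hb; simp [Matrix.diagonal_apply, hb])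
      (by simp), Matrix.diagonal_apply_eq, div_eq_mul_inv]
    ring
  · intro hpos hlast hsum
    have key : ∀ x : Fin N → ℝ,
        x ⬝ᵥ ((Matrix.vecMulVec y y + Matrix.diagonal d) *ᵥ x) =
          (∑ i, y i * x i) ^ 2 + ∑ i, d i * x i ^ 2 := by
      intro x
      rw [Matrix.add_mulVec, dotProduct_add]
      congr 1
      · simp only [dotProduct, Matrix.mulVec, Matrix.vecMulVec_apply, dotProduct]
        rw [sq, Finset.sum_mul_sum]
        refine Finset.sum_congr rfl fun i _ => ?_
        rw [Finset.mul_sum]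
        exact Finset.sum_congr rfl fun j _ => by ring
      · simp only [dotProduct, Matrix.mulVec_diagonal]
        exact Finset.sum_congr rfl fun i _ => by ring
    set l : Fin N := ⟨N - 1, by omega⟩ with hldef
    have hlmem : l ∈ (Finset.univ : Finset (Fin N)) := Finset.mem_univ l
    have hP : ∀ i ∈ Finset.univ.erase l, 0 < d i := by
      intro i hi
      apply hpos
      have h1 := Finset.ne_of_mem_erase hi
      have h2 : (i : ℕ) ≠ N - 1 := fun h => h1 (Fin.ext h)
      omega
    set a : ℝ := ∑ i ∈ Finset.univ.erase l, y i ^ 2 / d i with hadef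
    have ha : 0 ≤ a := Finset.sum_nonneg fun i hi =>
      div_nonneg (sq_nonneg _) (hP i hi).le
    have hsum' : 1 + a + y l ^ 2 / d l < 0 := by
      have := Finset.sum_erase_add Finset.univ (fun i => y i ^ 2 / d i) hlmem
      rw [← this] at hsum; linarith
    have hK : 0 < y l ^ 2 + d l * (1 + a) := by
      have h1 : (1 + a + y l ^ 2 / d l) * d l > 0 := mul_pos_of_neg_of_neg hsum' hlast
      have h2 : y l ^ 2 / d l * d l = y l ^ 2 := div_mul_cancel₀ _ (hd l)
      nlinarith
    have hherm : (Matrix.vecMulVec y y).IsHermitian := by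
      ext i j
      simp [Matrix.conjTranspose_apply, Matrix.vecMulVec_apply, mul_comm]
    refine Matrix.PosDef.of_dotProduct_mulVec_pos (hherm.add (Matrix.isHermitian_diagonal d)) fun x hx => ?_
    rw [star_trivial, key x]
    -- split sums
    set u : ℝ := ∑ i ∈ Finset.univ.erase l, y i * x i with hudef
    set S : ℝ := ∑ i ∈ Finset.univ.erase l, d i * x i ^ 2 with hSdef
    have hS : 0 ≤ S := Finset.sum_nonneg fun i hi =>
      mul_nonneg (hP i hi).le (sq_nonneg _)
    have hw : ∑ i, y i * x i = u + y l * x l :=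
      (Finset.sum_erase_add Finset.univ (fun i => y i * x i) hlmem).symm
    have hQ : ∑ i, d i * x i ^ 2 = S + d l * x l ^ 2 :=
      (Finset.sum_erase_add Finset.univ (fun i => d i * x i ^ 2) hlmem).symm
    -- Cauchy-Schwarz: u ^ 2 ≤ a * S
    have hcs : u ^ 2 ≤ a * S := by
      have h := sum_mul_sq_le_sq_mul_sq (Finset.univ.erase l)
        (fun i => y i / Real.sqrt (d i)) (fun i => Real.sqrt (d i) * x i)
      have e1 : ∑ i ∈ Finset.univ.erase l,
          (y i / Real.sqrt (d i)) * (Real.sqrt (d i) * x i) = u := by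
        refine Finset.sum_congr rfl fun i hi => ?_
        have hsq : Real.sqrt (d i) ≠ 0 := Real.sqrt_ne_zero'.mpr (hP i hi)
        field_simp
      have e2 : ∑ i ∈ Finset.univ.erase l, (y i / Real.sqrt (d i)) ^ 2 = a := by
        refine Finset.sum_congr rfl fun i hi => ?_
        rw [div_pow, Real.sq_sqrt (hP i hi).le]
      have e3 : ∑ i ∈ Finset.univ.erase l, (Real.sqrt (d i) * x i) ^ 2 = S := by
        refine Finset.sum_congr rfl fun i hi => ?_
        rw [mul_pow, Real.sq_sqrt (hP i hi).le]
      rw [e1, e2, e3] at h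
      exact h
    rw [hw, hQ]
    rcases eq_or_ne (x l) 0 with ht | ht
    · -- t = 0 : need S > 0 from some nonzero coordinate off l
      have hex : ∃ i ∈ Finset.univ.erase l, x i ≠ 0 := by
        obtain ⟨i, hi⟩ := Function.ne_iff.mp hx
        refine ⟨i, Finset.mem_erase.mpr ⟨?_, Finset.mem_univ i⟩, hi⟩
        rintro rfl; exact hi ht
      obtain ⟨i, hi, hxi⟩ := hex
      have hSpos : 0 < S :=
        Finset.sum_pos' (fun j hj => mul_nonneg (hP j hj).le (sq_nonneg _))
          ⟨i, hi, mul_pos (hP i hi) (by positivity)⟩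
      rw [ht]
      nlinarith [sq_nonneg (u + y l * 0)]
    · have ht2 : 0 < x l ^ 2 := by positivity
      rcases ha.eq_or_lt with ha0 | ha0
      · have hu0 : u = 0 := by
          have : u ^ 2 ≤ 0 := by rw [← ha0] at hcs; linarith
          nlinarith [sq_nonneg u]
        rw [hu0]
        nlinarith [mul_pos ht2 hK]
      · nlinarith [sq_nonneg ((1 + a) * u + a * (y l * x l)),
          mul_nonneg (by linarith : (0:ℝ) ≤ 1 + a) (by linarith : 0 ≤ a * S - u ^ 2),
          mul_pos (mul_pos ha0 ht2) hK,
          mul_pos ha0 (by linarith : (0:ℝ) < 1 + a)]
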